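/- Let (S_1, T_1), ..., (S_r, T_r) be a fooling set for the function f(S,T) ∈ {0,1} defined by f(S,T) = 0 iff the induced subgraph of T on S is connected (where S ⊆ [n], |S| > 1, T a tree on [n]). Suppose (a, x, b) is a witness for f(S_i, T_i) = 1 and also a witness for f(S_j, T_j) = 1, meaning a, b ∈ S_i, x ∉ S_i, x on the T_i-path from a to b, and the same with i replaced by j. Then i = j. -/

import Mathlib

/-- `x` lies on the (unique) path in `G` between `a` and `b`. -/
def onPath {V : Type*} (G : SimpleGraph V) (a x b : V) : Prop :=
  ∀ p : G.Walk a b, p.IsPath → x ∈ p.support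

lemma onPath_mem {V : Type*} (G : SimpleGraph V) (S : Set V)
    (hc : (G.induce S).Connected) {a x b : V} (ha : a ∈ S) (hb : b ∈ S)
    (hw : onPath G a x b) : x ∈ S := by
  classical
  obtain ⟨w⟩ := hc ⟨a, ha⟩ ⟨b, hb⟩
  have hx := hw (w.map (SimpleGraph.Embedding.induce S).toHom).bypass
    (SimpleGraph.Walk.bypass_isPath _)
  have hx2 := SimpleGraph.Walk.support_bypass_subset _ hx
  replace hx2 : x ∈ (w.map (SimpleGraph.Embedding.induce S).toHom).support := hx2
  rw [SimpleGraph.Walk.support_map, List.mem_map] at hx2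
  obtain ⟨y, _, rfl⟩ := hx2
  exact y.2

theorem stmt_6 {n r : ℕ} (S : Fin r → Set (Fin n))
    (T : Fin r → SimpleGraph (Fin n))
    (hT : ∀ i, (T i).IsTree) (hS : ∀ i, 1 < (S i).ncard)
    (hdiag : ∀ j, ¬ ((T j).induce (S j)).Connected)
    (hoff : ∀ i j, i ≠ j →
      ((T j).induce (S i)).Connected ∨ ((T i).induce (S j)).Connected)
    (i j : Fin r) (a x b : Fin n)
    (hai : a ∈ S i) (hbi : b ∈ S i) (hxi : x ∉ S i)
    (hwi : onPath (T i) a x b)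
    (haj : a ∈ S j) (hbj : b ∈ S j) (hxj : x ∉ S j)
    (hwj : onPath (T j) a x b) :
    i = j := by
  by_contra hij
  rcases hoff i j hij with hc | hc
  · exact hxi (onPath_mem (T j) (S i) hc hai hbi hwj)
  · exact hxj (onPath_mem (T i) (S j) hc haj hbj hwi)
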